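/- Let X_1, X_2, … be mutually independent real-valued random variables and set W_k = X_1 + ⋯ + X_k for k ≥ 1. Then for every real number w and every h ≥ 0, P[sup_{k≥1} W_k > w] ≤ e^{−hw} · sup_{k≥1} E[e^{h W_k}], where the event {sup_{k≥1} W_k > w} is the union over k of the events {W_k > w}. -/

import Mathlib

open MeasureTheory ProbabilityTheory

lemma my_indep_mul {Ω : Type*} [MeasurableSpace Ω] {P : Measure Ω}
    {X : ℕ → Ω → ℝ} (hmeas : ∀ i, Measurable (X i))
    (hindep : iIndepFun X P)
    (s t : Finset ℕ) (hst : Disjoint s t)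
    (F G : (ℕ → ℝ) → ENNReal) (hF : Measurable F) (hG : Measurable G) :
    ∫⁻ ω, F (fun j => if j ∈ s then X j ω else 0) *
        G (fun j => if j ∈ t then X j ω else 0) ∂P
      = (∫⁻ ω, F (fun j => if j ∈ s then X j ω else 0) ∂P) *
        ∫⁻ ω, G (fun j => if j ∈ t then X j ω else 0) ∂P := by
  classical
  set es : ((i : s) → ℝ) → (ℕ → ℝ) := fun v j => if hj : j ∈ s then v ⟨j, hj⟩ else 0 with hes_def
  set et : ((i : t) → ℝ) → (ℕ → ℝ) := fun v j => if hj : j ∈ t then v ⟨j, hj⟩ else 0 with het_def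
  have hes : Measurable es := by
    apply measurable_pi_lambda
    intro j
    by_cases hj : j ∈ s
    · simpa [es, hj] using measurable_pi_apply (⟨j, hj⟩ : s)
    · simp [es, hj]
  have het : Measurable et := by
    apply measurable_pi_lambda
    intro j
    by_cases hj : j ∈ t
    · simpa [et, hj] using measurable_pi_apply (⟨j, hj⟩ : t)
    · simp [et, hj]
  have h1 : ∀ ω, es (fun i : s => X i ω) = fun j => if j ∈ s then X j ω else 0 := by
    intro ω; funext j; by_cases hj : j ∈ s <;> simp [es, hj]
  have h2 : ∀ ω, et (fun i : t => X i ω) = fun j => if j ∈ t then X j ω else 0 := by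
    intro ω; funext j; by_cases hj : j ∈ t <;> simp [et, hj]
  have hind : IndepFun (fun ω => F (es (fun i : s => X i ω)))
      (fun ω => G (et (fun i : t => X i ω))) P :=
    (hindep.indepFun_finset s t hst hmeas).comp (hF.comp hes) (hG.comp het)
  have hmF : Measurable (fun ω => F (es (fun i : s => X i ω))) :=
    (hF.comp hes).comp (measurable_pi_lambda _ fun i => hmeas i)
  have hmG : Measurable (fun ω => G (et (fun i : t => X i ω))) :=
    (hG.comp het).comp (measurable_pi_lambda _ fun i => hmeas i)
  have := lintegral_mul_eq_lintegral_mul_lintegral_of_indepFun hmF hmG hind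
  simp only [Pi.mul_apply, h1, h2] at this
  exact this


/-- Key Lemma, supremum form.
`X i` stands for `X_{i+1}` and `W k = X_1 + ⋯ + X_k = ∑_{j < k} X j`.
If `X_1, X_2, …` are mutually independent, then for every real `w` and `h ≥ 0`,
`P[sup_{k ≥ 1} W k > w] ≤ e^{-h w} · sup_{k ≥ 1} E[e^{h W k}]`,
where `{sup_{k≥1} W_k > w}` is the union over `k ≥ 1` of `{W_k > w}` and the
expectations are Lebesgue integrals with values in `(0, ∞]`. -/
theorem stmt1 {Ω : Type*} [MeasurableSpace Ω] (P : Measure Ω) [IsProbabilityMeasure P]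
    (X : ℕ → Ω → ℝ)
    (hmeas : ∀ i, Measurable (X i))
    (hindep : iIndepFun X P)
    (W : ℕ → Ω → ℝ) (hW : ∀ k ω, W k ω = ∑ j ∈ Finset.range k, X j ω)
    (w h : ℝ) (hh : 0 ≤ h) :
    P (⋃ k : ℕ, {ω | w < W (k + 1) ω}) ≤
      ENNReal.ofReal (Real.exp (-h * w)) *
        ⨆ k : ℕ, ∫⁻ ω, ENNReal.ofReal (Real.exp (h * W (k + 1) ω)) ∂P := by
  classical
  have hWmeas : ∀ k, Measurable (W k) := by
    intro k
    have hWe : W k = fun ω => ∑ j ∈ Finset.range k, X j ω := funext fun ω => hW k ω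
    rw [hWe]
    exact Finset.measurable_sum _ fun j _ => hmeas j
  set f : ℕ → Ω → ENNReal := fun k ω => ENNReal.ofReal (Real.exp (h * W (k + 1) ω)) with hf_def
  have hfmeas : ∀ k, Measurable (f k) := fun k =>
    (Real.measurable_exp.comp ((hWmeas (k + 1)).const_mul h)).ennreal_ofReal
  set E : ℕ → ENNReal := fun n => ∫⁻ ω, f n ω ∂P with hE_def
  set S : ENNReal := ⨆ n, E n with hS_def
  set B : ℕ → Set Ω := fun k => {ω | w < W (k + 1) ω} with hB_def
  set D : ℕ → Set Ω := fun k => B k \ ⋃ (j : ℕ) (_ : j < k), B j with hD_def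
  have hBmeas : ∀ k, MeasurableSet (B k) :=
    fun k => measurableSet_lt measurable_const (hWmeas (k + 1))
  have hDmeas : ∀ k, MeasurableSet (D k) := fun k =>
    (hBmeas k).diff (MeasurableSet.iUnion fun j => MeasurableSet.iUnion fun _ => hBmeas j)
  have hDmem : ∀ k ω, ω ∈ D k ↔ (ω ∈ B k ∧ ∀ j < k, ω ∉ B j) := by
    intro k ω
    simp [hD_def, Set.mem_diff, Set.mem_iUnion]
  have hUnion : ⋃ k, D k = ⋃ k, B k := by
    apply Set.Subset.antisymm
    · exact Set.iUnion_mono fun k => Set.diff_subset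
    · intro ω hω
      rw [Set.mem_iUnion] at hω ⊢
      obtain ⟨k, hk⟩ := hω
      have hex : ∃ k, ω ∈ B k := ⟨k, hk⟩
      exact ⟨Nat.find hex, (hDmem _ _).mpr ⟨Nat.find_spec hex, fun j hj => Nat.find_min hex hj⟩⟩
  -- the goal
  show P (⋃ k, B k) ≤ ENNReal.ofReal (Real.exp (-h * w)) * S
  by_cases hStop : S = ⊤
  · rw [hStop, ENNReal.mul_top (by positivity)]
    exact le_top
  -- positivity and finiteness of E n
  have hE0 : ∀ n, E n ≠ 0 := by
    intro n
    have hpos : 0 < E n := by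
      rw [hE_def]
      rw [lintegral_pos_iff_support (hfmeas n)]
      have hsupp : Function.support (f n) = Set.univ :=
        Set.eq_univ_of_forall fun ω => (ENNReal.ofReal_pos.mpr (Real.exp_pos _)).ne'
      rw [hsupp]
      simp
    exact hpos.ne'
  have hEleS : ∀ n, E n ≤ S := fun n => le_iSup E n
  have hET : ∀ n, E n ≠ ⊤ := fun n => ne_top_of_le_ne_top hStop (hEleS n)
  -- per-k quantities
  set c : ℕ → ENNReal := fun k => ENNReal.ofReal (Real.exp (h * w)) * P (D k) with hc_def
  -- main finite-horizon estimate
  have key : ∀ n : ℕ, ∑ k ∈ Finset.range (n + 1), c k ≤ S := by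
    intro n
    -- set up per k ≤ n
    have hWsplit : ∀ k, k ≤ n → ∀ ω,
        W (n + 1) ω = W (k + 1) ω + ∑ j ∈ Finset.Ico (k + 1) (n + 1), X j ω := by
      intro k hk ω
      rw [hW, hW, Finset.range_eq_Ico, Finset.range_eq_Ico]
      exact (Finset.sum_Ico_consecutive _ (Nat.zero_le (k + 1)) (by omega : k + 1 ≤ n + 1)).symm
    set g : ℕ → Ω → ENNReal := fun k ω =>
      ENNReal.ofReal (Real.exp (h * ∑ j ∈ Finset.Ico (k + 1) (n + 1), X j ω)) with hg_def
    have hsplit_f : ∀ k, k ≤ n → ∀ ω, f n ω = f k ω * g k ω := by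
      intro k hk ω
      rw [hf_def, hg_def]
      simp only
      rw [hWsplit k hk ω, mul_add, Real.exp_add, ENNReal.ofReal_mul (Real.exp_nonneg _)]
    -- independence consequences
    have hGint : ∀ k, k ≤ n → ∀ (F : (ℕ → ℝ) → ENNReal), Measurable F →
        (∫⁻ ω, F (fun j => if j ∈ Finset.range (k + 1) then X j ω else 0) * g k ω ∂P)
          = (∫⁻ ω, F (fun j => if j ∈ Finset.range (k + 1) then X j ω else 0) ∂P)
            * ∫⁻ ω, g k ω ∂P := by
      intro k hk F hF
      have hst : Disjoint (Finset.range (k + 1)) (Finset.Ico (k + 1) (n + 1)) := by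
        rw [Finset.disjoint_left]
        intro a ha hb
        simp only [Finset.mem_range] at ha
        simp only [Finset.mem_Ico] at hb
        omega
      set G : (ℕ → ℝ) → ENNReal := fun x =>
        ENNReal.ofReal (Real.exp (h * ∑ j ∈ Finset.Ico (k + 1) (n + 1), x j)) with hG_def
      have hGm : Measurable G :=
        (Real.measurable_exp.comp
          ((Finset.measurable_sum _ fun j _ => measurable_pi_apply j).const_mul h)).ennreal_ofReal
      have hGeq : ∀ ω,
          G (fun j => if j ∈ Finset.Ico (k + 1) (n + 1) then X j ω else 0) = g k ω := by
        intro ω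
        rw [hG_def, hg_def]
        exact congrArg (fun r => ENNReal.ofReal (Real.exp (h * r)))
          (Finset.sum_congr rfl fun j hj => if_pos hj)
      have := my_indep_mul hmeas hindep (Finset.range (k + 1)) (Finset.Ico (k + 1) (n + 1))
        hst F G hF hGm
      simpa only [hGeq] using this
    -- the coordinate sums equal W
    have keysum : ∀ k, ∀ m ≤ k, ∀ ω,
        ∑ j ∈ Finset.range (m + 1),
          (if j ∈ Finset.range (k + 1) then X j ω else 0) = W (m + 1) ω := by
      intro k m hm ω
      rw [hW]
      refine Finset.sum_congr rfl fun j hj => ?_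
      rw [if_pos]
      simp only [Finset.mem_range] at hj ⊢
      omega
    -- E n = E k * ∫ g k
    have eq1 : ∀ k, k ≤ n → E n = E k * ∫⁻ ω, g k ω ∂P := by
      intro k hk
      set F : (ℕ → ℝ) → ENNReal := fun x =>
        ENNReal.ofReal (Real.exp (h * ∑ j ∈ Finset.range (k + 1), x j)) with hF_def
      have hFm : Measurable F :=
        (Real.measurable_exp.comp
          ((Finset.measurable_sum _ fun j _ => measurable_pi_apply j).const_mul h)).ennreal_ofReal
      have hFeq : ∀ ω,
          F (fun j => if j ∈ Finset.range (k + 1) then X j ω else 0) = f k ω := by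
        intro ω
        rw [hF_def, hf_def]
        simp only
        rw [keysum k k le_rfl ω]
      have := hGint k hk F hFm
      simp only [hFeq] at this
      rw [hE_def]
      simp only
      calc (∫⁻ ω, f n ω ∂P) = ∫⁻ ω, f k ω * g k ω ∂P :=
            lintegral_congr fun ω => hsplit_f k hk ω
        _ = (∫⁻ ω, f k ω ∂P) * ∫⁻ ω, g k ω ∂P := this
    -- indicator version
    have eq2 : ∀ k, k ≤ n →
        (∫⁻ ω, Set.indicator (D k) (f n) ω ∂P)
          = (∫⁻ ω, Set.indicator (D k) (f k) ω ∂P) * ∫⁻ ω, g k ω ∂P := by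
      intro k hk
      set Cx : Set (ℕ → ℝ) :=
        {x | w < ∑ j ∈ Finset.range (k + 1), x j} \
          ⋃ (j : ℕ) (_ : j < k), {x | w < ∑ i ∈ Finset.range (j + 1), x i} with hCx_def
      have hCxm : MeasurableSet Cx := by
        refine MeasurableSet.diff ?_ (MeasurableSet.iUnion fun j => MeasurableSet.iUnion fun _ => ?_)
        · exact measurableSet_lt measurable_const
            (Finset.measurable_sum _ fun j _ => measurable_pi_apply j)
        · exact measurableSet_lt measurable_const
            (Finset.measurable_sum _ fun i _ => measurable_pi_apply i)
      set F : (ℕ → ℝ) → ENNReal := Set.indicator Cx (fun x =>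
        ENNReal.ofReal (Real.exp (h * ∑ j ∈ Finset.range (k + 1), x j))) with hF_def
      have hFm : Measurable F :=
        Measurable.indicator
          ((Real.measurable_exp.comp
            ((Finset.measurable_sum _ fun j _ => measurable_pi_apply j).const_mul h)).ennreal_ofReal)
          hCxm
      have hmem : ∀ ω,
          ((fun j => if j ∈ Finset.range (k + 1) then X j ω else 0) ∈ Cx) ↔ ω ∈ D k := by
        intro ω
        rw [hCx_def, hDmem k ω]
        simp only [Set.mem_diff, Set.mem_setOf_eq, Set.mem_iUnion, not_exists]
        constructor
        · rintro ⟨h1, h2⟩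
          refine ⟨?_, fun j hj => ?_⟩
          · rwa [keysum k k le_rfl ω] at h1
          · intro hB
            exact h2 j hj (by rwa [keysum k j (le_of_lt hj) ω])
        · rintro ⟨h1, h2⟩
          refine ⟨by rwa [keysum k k le_rfl ω], fun j hj hB => ?_⟩
          rw [keysum k j (le_of_lt hj) ω] at hB
          exact h2 j hj hB
      have hFeq : ∀ ω,
          F (fun j => if j ∈ Finset.range (k + 1) then X j ω else 0)
            = Set.indicator (D k) (f k) ω := by
        intro ω
        by_cases hωD : ω ∈ D k
        · rw [hF_def, Set.indicator_of_mem ((hmem ω).mpr hωD), Set.indicator_of_mem hωD]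
          rw [keysum k k le_rfl ω]
        · rw [hF_def, Set.indicator_of_notMem (fun hc => hωD ((hmem ω).mp hc)),
            Set.indicator_of_notMem hωD]
      have hfac := hGint k hk F hFm
      simp only [hFeq] at hfac
      calc (∫⁻ ω, Set.indicator (D k) (f n) ω ∂P)
          = ∫⁻ ω, Set.indicator (D k) (f k) ω * g k ω ∂P := by
            refine lintegral_congr fun ω => ?_
            rw [show f n = fun ω => f k ω * g k ω from funext (hsplit_f k hk)]
            exact Set.indicator_mul_left (D k) (f k) (g k)
        _ = (∫⁻ ω, Set.indicator (D k) (f k) ω ∂P) * ∫⁻ ω, g k ω ∂P := hfac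
    -- lower bound on indicator integral
    have ineq3 : ∀ k, c k ≤ ∫⁻ ω, Set.indicator (D k) (f k) ω ∂P := by
      intro k
      rw [hc_def]
      simp only
      rw [← lintegral_indicator_const (hDmeas k)]
      refine lintegral_mono fun ω => ?_
      by_cases hωD : ω ∈ D k
      · rw [Set.indicator_of_mem hωD, Set.indicator_of_mem hωD]
        have hwW : w < W (k + 1) ω := ((hDmem k ω).mp hωD).1
        exact ENNReal.ofReal_le_ofReal
          (Real.exp_le_exp.mpr (mul_le_mul_of_nonneg_left hwW.le hh))
      · rw [Set.indicator_of_notMem hωD, Set.indicator_of_notMem hωD]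
    -- sum of indicator integrals bounded by E n
    have ineq4 : ∑ k ∈ Finset.range (n + 1), ∫⁻ ω, Set.indicator (D k) (f n) ω ∂P ≤ E n := by
      rw [← lintegral_finset_sum _ fun k _ => (hfmeas n).indicator (hDmeas k)]
      refine lintegral_mono fun ω => ?_
      by_cases hex : ∃ k ∈ Finset.range (n + 1), ω ∈ D k
      · obtain ⟨k0, hk0r, hk0⟩ := hex
        rw [Finset.sum_eq_single_of_mem k0 hk0r ?_]
        · exact Set.indicator_le_self _ _ ω
        · intro k _ hkne
          apply Set.indicator_of_notMem
          intro hk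
          rcases lt_or_gt_of_ne hkne with hlt | hgt
          · exact ((hDmem k0 ω).mp hk0).2 k hlt ((hDmem k ω).mp hk).1
          · exact ((hDmem k ω).mp hk).2 k0 hgt ((hDmem k0 ω).mp hk0).1
      · rw [Finset.sum_eq_zero fun k hkr => Set.indicator_of_notMem
          (fun hk => hex ⟨k, hkr, hk⟩) _]
        exact zero_le
    -- combine
    have chain : (∑ k ∈ Finset.range (n + 1), c k) * E n ≤ E n * S := by
      calc (∑ k ∈ Finset.range (n + 1), c k) * E n
          = ∑ k ∈ Finset.range (n + 1), c k * E n := Finset.sum_mul _ _ _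
        _ = ∑ k ∈ Finset.range (n + 1), c k * (E k * ∫⁻ ω, g k ω ∂P) := by
            refine Finset.sum_congr rfl fun k hk => ?_
            rw [← eq1 k (by simpa [Nat.lt_succ_iff] using hk)]
        _ ≤ ∑ k ∈ Finset.range (n + 1), c k * (S * ∫⁻ ω, g k ω ∂P) := by
            refine Finset.sum_le_sum fun k _ => ?_
            exact mul_le_mul_right (mul_le_mul_left (hEleS k) _) _
        _ = (∑ k ∈ Finset.range (n + 1), c k * ∫⁻ ω, g k ω ∂P) * S := by
            rw [Finset.sum_mul]
            refine Finset.sum_congr rfl fun k _ => ?_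
            ring
        _ ≤ E n * S := by
            refine mul_le_mul_left ?_ S
            calc ∑ k ∈ Finset.range (n + 1), c k * ∫⁻ ω, g k ω ∂P
                ≤ ∑ k ∈ Finset.range (n + 1),
                    (∫⁻ ω, Set.indicator (D k) (f k) ω ∂P) * ∫⁻ ω, g k ω ∂P :=
                  Finset.sum_le_sum fun k _ => mul_le_mul_left (ineq3 k) _
              _ = ∑ k ∈ Finset.range (n + 1), ∫⁻ ω, Set.indicator (D k) (f n) ω ∂P := by
                  refine Finset.sum_congr rfl fun k hk => ?_
                  rw [← eq2 k (by simpa [Nat.lt_succ_iff] using hk)]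
              _ ≤ E n := ineq4
    rw [mul_comm (E n) S] at chain
    exact (ENNReal.mul_le_mul_iff_left (hE0 n) (hET n)).mp chain
  -- pass to the tsum
  have hsum : ∑' k, c k ≤ S := by
    refine Summable.tsum_le_of_sum_le ENNReal.summable fun u => ?_
    have hsub : u ⊆ Finset.range (u.sup id + 1) := by
      intro j hj
      simp only [Finset.mem_range, Nat.lt_succ_iff]
      exact Finset.le_sup (f := id) hj
    calc ∑ k ∈ u, c k ≤ ∑ k ∈ Finset.range (u.sup id + 1), c k :=
          Finset.sum_le_sum_of_subset hsub
      _ ≤ S := key _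
  have hle : ENNReal.ofReal (Real.exp (h * w)) * P (⋃ k, B k) ≤ S := by
    rw [← hUnion]
    calc ENNReal.ofReal (Real.exp (h * w)) * P (⋃ k, D k)
        ≤ ENNReal.ofReal (Real.exp (h * w)) * ∑' k, P (D k) :=
          mul_le_mul_right (measure_iUnion_le D) _
      _ = ∑' k, c k := ENNReal.tsum_mul_left.symm
      _ ≤ S := hsum
  calc P (⋃ k, B k)
      = (ENNReal.ofReal (Real.exp (-h * w)) * ENNReal.ofReal (Real.exp (h * w)))
          * P (⋃ k, B k) := by
        rw [← ENNReal.ofReal_mul (Real.exp_nonneg _), ← Real.exp_add]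
        norm_num
    _ = ENNReal.ofReal (Real.exp (-h * w))
          * (ENNReal.ofReal (Real.exp (h * w)) * P (⋃ k, B k)) := mul_assoc _ _ _
    _ ≤ ENNReal.ofReal (Real.exp (-h * w)) * S := mul_le_mul_right hle _
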